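/- (Shift property of absolute energy minimizers.) In the abstract trajectory setting with energy readout e, let y ∈ Y, let u ∈ 𝒰(y) be an absolute energy minimizer in 𝒰(y), and let T ≥ 0. Then the shifted trajectory S_T u is an absolute energy minimizer in 𝒰(u(T)): for every w ∈ 𝒰(u(T)) there exists λ̄ > 0 such that ∫₀^∞ exp(−λt)·e(u(t+T)) dt ≤ ∫₀^∞ exp(−λt)·e(w(t)) dt for all λ ≥ λ̄. -/

import Mathlib

open MeasureTheory

private lemma aem_integrable {f : ℝ → ℝ} (hf : AntitoneOn f (Set.Ici 0))
    (hpos : ∀ t ∈ Set.Ici (0:ℝ), 0 ≤ f t) {lam : ℝ} (hlam : 0 < lam) :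
    IntegrableOn (fun t => Real.exp (-lam * t) * f t) (Set.Ici 0) := by
  set g : ℝ → ℝ := fun t => f (max t 0) with hg
  have hganti : Antitone g := by
    intro s t hst
    exact hf (le_max_right s 0) (le_max_right t 0) (max_le_max hst le_rfl)
  have hgm : Measurable g := hganti.measurable
  have hdom : IntegrableOn (fun t => Real.exp (-lam * t) * f 0) (Set.Ici 0) := by
    have := (exp_neg_integrableOn_Ioi (0:ℝ) hlam).mul_const (f 0)
    exact (integrableOn_Ici_iff_integrableOn_Ioi).2 this
  have hgi : IntegrableOn (fun t => Real.exp (-lam * t) * g t) (Set.Ici 0) := by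
    refine Integrable.mono' hdom
      ((Real.measurable_exp.comp (measurable_const.mul measurable_id)).mul hgm).aestronglyMeasurable ?_
    refine (ae_restrict_iff' measurableSet_Ici).2 (ae_of_all _ fun t ht => ?_)
    have h0 : 0 ≤ g t := hpos _ (le_max_right t 0)
    have h1 : g t ≤ f 0 := hf Set.self_mem_Ici (le_max_right t 0) (le_max_right t 0)
    rw [Real.norm_eq_abs, abs_of_nonneg (mul_nonneg (Real.exp_pos _).le h0)]
    exact mul_le_mul_of_nonneg_left h1 (Real.exp_pos _).le
  exact hgi.congr_fun (fun t ht => by simp [hg, max_eq_left (Set.mem_Ici.1 ht)]) measurableSet_Ici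

private lemma aem_translate (f : ℝ → ℝ) (T : ℝ) :
    (∫ t in Set.Ici (0:ℝ), f (t + T)) = ∫ t in Set.Ici T, f t := by
  rw [← integral_indicator measurableSet_Ici, ← integral_indicator measurableSet_Ici]
  rw [show (Set.Ici (0:ℝ)).indicator (fun t => f (t + T)) = fun t => (Set.Ici T).indicator f (t + T) by
    funext t
    by_cases h : (0:ℝ) ≤ t
    · rw [Set.indicator_of_mem (Set.mem_Ici.2 h), Set.indicator_of_mem (by simpa using h)]
    · rw [Set.indicator_of_notMem (by simpa using h : t ∉ Set.Ici (0:ℝ)), Set.indicator_of_notMem (by simpa using h : t + T ∉ Set.Ici T)]]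
  exact integral_add_right_eq_self _ T

/-- Shift property of absolute energy minimizers (Proposition AL1, first part). -/
theorem shift_of_absolute_energy_minimizer {Y : Type*}
    (𝒰 : Y → Set (ℝ → Y)) (e : Y → ℝ)
    (hshift : ∀ y, ∀ u ∈ 𝒰 y, ∀ T : ℝ, 0 ≤ T → (fun t => u (t + T)) ∈ 𝒰 (u T))
    (hconcat : ∀ y, ∀ u ∈ 𝒰 y, ∀ T : ℝ, 0 ≤ T → ∀ v ∈ 𝒰 (u T),
      (fun t => if t ≤ T then u t else v (t - T)) ∈ 𝒰 y)
    (hmono : ∀ y, ∀ u ∈ 𝒰 y, AntitoneOn (fun t => e (u t)) (Set.Ici 0))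
    (hnonneg : ∀ y, ∀ u ∈ 𝒰 y, ∀ t, 0 ≤ t → 0 ≤ e (u t))
    (y : Y) (u : ℝ → Y) (hu : u ∈ 𝒰 y)
    (habs : ∀ w ∈ 𝒰 y, ∃ lam₀ > (0:ℝ), ∀ lam, lam₀ ≤ lam →
      (∫ t in Set.Ici (0:ℝ), Real.exp (-lam * t) * e (u t))
        ≤ ∫ t in Set.Ici (0:ℝ), Real.exp (-lam * t) * e (w t))
    (T : ℝ) (hT : 0 ≤ T) :
    ∀ w ∈ 𝒰 (u T), ∃ lam₀ > (0:ℝ), ∀ lam, lam₀ ≤ lam →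
      (∫ t in Set.Ici (0:ℝ), Real.exp (-lam * t) * e (u (t + T)))
        ≤ ∫ t in Set.Ici (0:ℝ), Real.exp (-lam * t) * e (w t) := by
  intro w hw
  set z : ℝ → Y := fun t => if t ≤ T then u t else w (t - T) with hzdef
  have hz : z ∈ 𝒰 y := hconcat y u hu T hT w hw
  obtain ⟨lam₀, hlam₀, hmin⟩ := habs z hz
  refine ⟨lam₀, hlam₀, fun lam hlam => ?_⟩
  have hlampos : 0 < lam := lt_of_lt_of_le hlam₀ hlam
  -- integrability
  have hui : IntegrableOn (fun t => Real.exp (-lam * t) * e (u t)) (Set.Ici 0) :=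
    aem_integrable (hmono y u hu) (fun t ht => hnonneg y u hu t ht) hlampos
  have hzi : IntegrableOn (fun t => Real.exp (-lam * t) * e (z t)) (Set.Ici 0) :=
    aem_integrable (hmono y z hz) (fun t ht => hnonneg y z hz t ht) hlampos
  -- (1) rewrite LHS via translation
  have h1 : (∫ t in Set.Ici (0:ℝ), Real.exp (-lam * t) * e (u (t + T)))
      = Real.exp (lam * T) * ∫ t in Set.Ici T, Real.exp (-lam * t) * e (u t) := by
    rw [← aem_translate (fun t => Real.exp (-lam * t) * e (u t)) T, ← integral_const_mul]
    refine setIntegral_congr_fun measurableSet_Ici (fun t ht => ?_)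
    rw [← mul_assoc, ← Real.exp_add]
    ring_nf
  -- (2) rewrite RHS via translation and z
  have h2 : (∫ t in Set.Ici (0:ℝ), Real.exp (-lam * t) * e (w t))
      = Real.exp (lam * T) * ∫ t in Set.Ici T, Real.exp (-lam * t) * e (z t) := by
    rw [← aem_translate (fun t => Real.exp (-lam * t) * e (z t)) T, ← integral_const_mul]
    refine setIntegral_congr_ae measurableSet_Ici ?_
    have h0 : ∀ᵐ t : ℝ, t ≠ 0 := by
      refine ae_iff.2 ?_
      have : {a : ℝ | ¬ a ≠ 0} = {0} := by ext a; simp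
      rw [this]; exact measure_singleton 0
    filter_upwards [h0] with t htne htmem
    have htpos : 0 < t := lt_of_le_of_ne htmem (Ne.symm htne)
    have hzt : z (t + T) = w t := by
      rw [hzdef]; simp only
      rw [if_neg (by linarith), add_sub_cancel_right]
    rw [hzt, ← mul_assoc, ← Real.exp_add]
    ring_nf
  -- (3) reduce the minimality inequality to Ici T
  have hsplit : ∀ (f : ℝ → ℝ), IntegrableOn f (Set.Ici 0) →
      (∫ t in Set.Ici (0:ℝ), f t)
        = (∫ t in Set.Ico (0:ℝ) T, f t) + ∫ t in Set.Ici T, f t := by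
    intro f hf
    rw [← setIntegral_union ((Set.Iio_disjoint_Ici le_rfl).mono_left Set.Ico_subset_Iio_self) measurableSet_Ici
      (hf.mono_set Set.Ico_subset_Ici_self) (hf.mono_set (Set.Ici_subset_Ici.2 hT)),
      Set.Ico_union_Ici_eq_Ici hT]
  have heqIco : (∫ t in Set.Ico (0:ℝ) T, Real.exp (-lam * t) * e (u t))
      = ∫ t in Set.Ico (0:ℝ) T, Real.exp (-lam * t) * e (z t) := by
    refine setIntegral_congr_fun measurableSet_Ico (fun t ht => ?_)
    rw [hzdef]; simp only
    rw [if_pos ht.2.le]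
  have hkey : (∫ t in Set.Ici T, Real.exp (-lam * t) * e (u t))
      ≤ ∫ t in Set.Ici T, Real.exp (-lam * t) * e (z t) := by
    have := hmin lam hlam
    rw [hsplit _ hui, hsplit _ hzi, heqIco] at this
    linarith
  rw [h1, h2]
  exact mul_le_mul_of_nonneg_left hkey (Real.exp_pos _).le
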